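/- If an ω-word ϖ over Σ × Q is rejected by the collection automaton C, then there exists an index i and a state qᵢ (the i-th promise component of ϖ) such that the suffix σᵢσᵢ₊₁... has a rejecting run in the UCA A starting from qᵢ; i.e., some individual promise is violated. -/
import Mathlib


/-- `ρ` is a run of the automaton with transitions `δ` from `q` on word `w`. -/
def IsRun {A Q : Type*} (δ : Q → A → Set Q) (q : Q) (w : ℕ → A) (ρ : ℕ → Q) : Prop :=
  ρ 0 = q ∧ ∀ i, ρ (i + 1) ∈ δ (ρ i) (w i)

/-- `ρ` is rejecting: it takes rejecting transitions (given by `γ`) infinitely often. -/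
def RejRun {A Q : Type*} (γ : Q → A → Set Q) (w : ℕ → A) (ρ : ℕ → Q) : Prop :=
  ∀ N : ℕ, ∃ i ≥ N, ρ (i + 1) ∈ γ (ρ i) (w i)

/-- The language of the UCA `(δ, γ)` from state `q`: the words having no rejecting run. -/
def UCALang {A Q : Type*} (δ γ : Q → A → Set Q) (q : Q) (w : ℕ → A) : Prop :=
  ∀ ρ : ℕ → Q, IsRun δ q w ρ → ¬ RejRun γ w ρ

/-- Transitions of the collection automaton over `A × Q`, with fresh initial state `none`. -/
def collδ {A Q : Type*} (δ : Q → A → Set Q) : Option Q → A × Q → Set (Option Q)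
  | some q, (σ, _) => some '' δ q σ
  | none, (σ, q) => insert none (some '' δ q σ)

/-- Rejecting transitions of the collection automaton. -/
def collγ {A Q : Type*} (δ γ : Q → A → Set Q) : Option Q → A × Q → Set (Option Q)
  | some q, (σ, _) => some '' γ q σ
  | none, (σ, q) => some '' δ q σ

theorem stmt5 {A Q : Type*} (δ γ : Q → A → Set Q)
    (hγ : ∀ q σ, γ q σ ⊆ δ q σ) (w : ℕ → A × Q)
    (hrej : ∃ ρ : ℕ → Option Q, IsRun (collδ δ) none w ρ ∧ RejRun (collγ δ γ) w ρ) :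
    ∃ i : ℕ, ∃ ρ : ℕ → Q, IsRun δ (w i).2 (fun k => (w (i + k)).1) ρ ∧
      RejRun γ (fun k => (w (i + k)).1) ρ := by
  classical
  obtain ⟨ρ, ⟨h0, hstep⟩, hR⟩ := hrej
  -- there is an index where the run leaves `none`
  have hex : ∃ n, ρ (n + 1) ≠ none := by
    obtain ⟨i, -, hi⟩ := hR 0
    refine ⟨i, ?_⟩
    cases hq : ρ i with
    | none =>
      rw [hq] at hi
      simp only [collγ] at hi
      rcases (w i) with ⟨σ, q⟩
      obtain ⟨q', -, hq'⟩ := hi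
      simp [← hq']
    | some q =>
      rw [hq] at hi
      simp only [collγ] at hi
      rcases (w i) with ⟨σ, q''⟩
      obtain ⟨q', -, hq'⟩ := hi
      simp [← hq']
  set i₀ := Nat.find hex with hi₀
  have hleave : ρ (i₀ + 1) ≠ none := Nat.find_spec hex
  -- ρ i₀ = none
  have hnone : ρ i₀ = none := by
    cases hh : i₀ with
    | zero => exact h0
    | succ m =>
      have := Nat.find_min hex (by omega : m < i₀)
      simpa using this
  -- all states after i₀ are some
  have hsome : ∀ n, (ρ (i₀ + n + 1)).isSome := by
    intro n
    induction n with
    | zero => exact Option.isSome_iff_ne_none.mpr hleave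
    | succ m ih =>
      have hs := hstep (i₀ + m + 1)
      obtain ⟨q, hq⟩ := Option.isSome_iff_exists.mp ih
      rw [hq] at hs
      simp only [collδ] at hs
      rcases hw : (w (i₀ + m + 1)) with ⟨σ, q''⟩
      rw [hw] at hs
      obtain ⟨q', -, hq'⟩ := hs
      simp [show ρ (i₀ + (m + 1) + 1) = some q' from hq'.symm]
  refine ⟨i₀, fun k => Nat.rec ((w i₀).2) (fun n _ => (ρ (i₀ + n + 1)).get (hsome n)) k, ⟨rfl, ?_⟩, ?_⟩
  · intro k
    cases k with
    | zero =>
      have hs := hstep i₀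
      rw [hnone] at hs
      simp only [collδ] at hs
      rcases hw : (w i₀) with ⟨σ, q⟩
      rw [hw] at hs
      rcases hs with hs | ⟨q', hq', hq''⟩
      · exact absurd hs hleave
      · simp only [Nat.add_zero]
        rw [hw]
        have : (ρ (i₀ + 0 + 1)).get (hsome 0) = q' := by
          simp [show i₀ + 0 + 1 = i₀ + 1 from rfl, ← hq'']
        rw [this]
        exact hq'
    | succ m =>
      have hs := hstep (i₀ + m + 1)
      obtain ⟨q, hq⟩ := Option.isSome_iff_exists.mp (hsome m)
      rw [hq] at hs
      simp only [collδ] at hs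
      rcases hw : (w (i₀ + m + 1)) with ⟨σ, q''⟩
      rw [hw] at hs
      obtain ⟨q', hq', hq''⟩ := hs
      have e1 : (ρ (i₀ + m + 1)).get (hsome m) = q := by simp [hq]
      have e2 : (ρ (i₀ + m + 1 + 1)).get (hsome (m + 1)) = q' := by
        simp [← hq'']
      simp only [show i₀ + (m + 1) = i₀ + m + 1 from rfl, hw]
      simpa [e1, e2] using hq'
  · intro N
    obtain ⟨i, hiN, hi⟩ := hR (i₀ + N + 1)
    obtain ⟨k, rfl⟩ : ∃ k, i = i₀ + k + 1 := ⟨i - i₀ - 1, by omega⟩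
    have hkN : k + 1 ≥ N := by omega
    refine ⟨k + 1, hkN, ?_⟩
    obtain ⟨q, hq⟩ := Option.isSome_iff_exists.mp (hsome k)
    rw [hq] at hi
    simp only [collγ] at hi
    rcases hw : (w (i₀ + k + 1)) with ⟨σ, q''⟩
    rw [hw] at hi
    obtain ⟨q', hq', hq''⟩ := hi
    have e1 : (ρ (i₀ + k + 1)).get (hsome k) = q := by simp [hq]
    have e2 : (ρ (i₀ + k + 1 + 1)).get (hsome (k + 1)) = q' := by
      simp [← hq'']
    simp only [show i₀ + (k + 1) = i₀ + k + 1 from rfl, hw]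
    simpa [e1, e2] using hq'
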